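/- Consider the two-alternative setting A = {a,b} and a weighted sink mechanism that ignores fixed agent i* and maximizes Σ_{j≠i*} w_j v_j(a) with positive weights w_j. If two non-sink agents j and j' have w_j > w_{j'} > 0, then the supremum of welfare loss over profiles with valuations in (-M/2, M/2) is at least M·(2 − w_{j'}/w_j), which is strictly greater than M. -/

import Mathlib

open Finset

lemma sum3 {n : ℕ} (a b c : Fin n) (hab : a ≠ b) (hac : a ≠ c) (hbc : b ≠ c)
    (g : Fin n → ℝ) (h0 : ∀ i, i ≠ a → i ≠ b → i ≠ c → g i = 0) :
    ∑ i, g i = g a + g b + g c := by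
  rw [← Finset.sum_subset (Finset.subset_univ ({a, b, c} : Finset (Fin n)))
      (fun x _ hx => by
        simp only [Finset.mem_insert, Finset.mem_singleton, not_or] at hx
        exact h0 x hx.1 hx.2.1 hx.2.2)]
  rw [Finset.sum_insert (by simp [hab, hac]), Finset.sum_insert (by simp [hbc]),
    Finset.sum_singleton, add_assoc]

lemma sum2e {n : ℕ} (istar a b : Fin n) (ha : a ≠ istar) (hb : b ≠ istar) (hab : a ≠ b)
    (g : Fin n → ℝ) (h0 : ∀ i, i ≠ istar → i ≠ a → i ≠ b → g i = 0) :
    ∑ i ∈ Finset.univ.erase istar, g i = g a + g b := by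
  rw [← Finset.sum_subset (s₁ := ({a, b} : Finset (Fin n)))
      (by
        intro x hx
        simp only [Finset.mem_insert, Finset.mem_singleton] at hx
        rcases hx with h | h <;> subst h <;> simp [ha, hb])
      (fun x hx hx2 => by
        simp only [Finset.mem_erase] at hx
        simp only [Finset.mem_insert, Finset.mem_singleton, not_or] at hx2
        exact h0 x hx.1 hx2.1 hx2.2)]
  rw [Finset.sum_insert (by simp [hab]), Finset.sum_singleton]

/-- a weighted sink mechanism with unequal positive weights
`w j > w j'` has worst-case welfare loss at least `M * (2 - w j' / w j) > M`. -/
theorem stmt_3 {n : ℕ} (hn : 3 ≤ n) (M : ℝ) (hM : 0 < M)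
    (istar : Fin n) (w : Fin n → ℝ) (hw : ∀ i, i ≠ istar → 0 < w i)
    (j j' : Fin n) (hj : j ≠ istar) (hj' : j' ≠ istar) (hjj' : j ≠ j')
    (hwjj' : w j' < w j)
    (f : (Fin n → Bool → ℝ) → Bool)
    (hf : ∀ v : Fin n → Bool → ℝ, (∀ i x, v i x ∈ Set.Ioo (-(M/2)) (M/2)) →
        ∀ x : Bool, ∑ i ∈ Finset.univ.erase istar, w i * v i x ≤
          ∑ i ∈ Finset.univ.erase istar, w i * v i (f v)) :
    (∀ ε > (0:ℝ), ∃ v : Fin n → Bool → ℝ,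
        (∀ i x, v i x ∈ Set.Ioo (-(M/2)) (M/2)) ∧
        max (∑ i, v i true) (∑ i, v i false) - ∑ i, v i (f v)
          > M * (2 - w j' / w j) - ε)
    ∧ M < M * (2 - w j' / w j) := by
  have hwj : 0 < w j := hw j hj
  have hwj' : 0 < w j' := hw j' hj'
  have hwjne : w j ≠ 0 := ne_of_gt hwj
  set r : ℝ := w j' / w j with hrdef
  clear_value r
  have hr1 : r < 1 := by rw [hrdef]; exact (div_lt_one hwj).2 hwjj'
  have hr0 : 0 < r := by rw [hrdef]; exact div_pos hwj' hwj
  constructor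
  · intro ε hε
    set η : ℝ := min (ε/7) (M/4) with hηdef
    have hη0 : 0 < η := lt_min (by linarith) (by linarith)
    have hηε : η ≤ ε/7 := min_le_left _ _
    have hηM : η ≤ M/4 := min_le_right _ _
    clear_value η
    set c : ℝ := M/2 - η with hc
    set d : ℝ := r * c + η with hd
    clear_value c d
    have hc0 : 0 < c := by rw [hc]; linarith
    have hcM : c < M/2 := by rw [hc]; linarith
    have hd0 : 0 < d := by rw [hd]; nlinarith
    have hrc : r * c < c := by nlinarith
    have hdM : d < M/2 := by rw [hd]; linarith
    set u : Fin n → ℝ := fun i =>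
      if i = istar then c else if i = j then -d else if i = j' then c else 0 with hu
    set v : Fin n → Bool → ℝ := fun i x => if x then u i else -u i with hv
    have hui : u istar = c := by simp [hu]
    have huj : u j = -d := by simp [hu, hj]
    have huj' : u j' = c := by simp [hu, hj', hjj'.symm]
    have hu0 : ∀ i, i ≠ istar → i ≠ j → i ≠ j' → u i = 0 := by
      intro i h1 h2 h3; simp [hu, h1, h2, h3]
    have hvt : ∀ i, v i true = u i := by intro i; simp [hv]
    have hvf : ∀ i, v i false = -u i := by intro i; simp [hv]
    have hbound : ∀ i x, v i x ∈ Set.Ioo (-(M/2)) (M/2) := by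
      intro i x
      have hb : -(M/2) < u i ∧ u i < M/2 := by
        rw [hu]; dsimp only
        split_ifs <;> constructor <;> linarith
      have hvx : v i x = u i ∨ v i x = -u i := by
        cases x
        · exact Or.inr (hvf i)
        · exact Or.inl (hvt i)
      rcases hvx with h | h <;> rw [Set.mem_Ioo, h] <;>
        exact ⟨by linarith [hb.1, hb.2], by linarith [hb.1, hb.2]⟩
    -- welfare sums
    have hStrue : ∑ i, v i true = 2 * c - d := by
      rw [sum3 istar j j' (Ne.symm hj) (Ne.symm hj') hjj' (fun i => v i true)
        (fun i h1 h2 h3 => by show v i true = 0; rw [hvt i, hu0 i h1 h2 h3])]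
      show v istar true + v j true + v j' true = _
      rw [hvt, hvt, hvt, hui, huj, huj']; ring
    have hSfalse : ∑ i, v i false = -(2 * c - d) := by
      rw [sum3 istar j j' (Ne.symm hj) (Ne.symm hj') hjj' (fun i => v i false)
        (fun i h1 h2 h3 => by show v i false = 0; rw [hvf i, hu0 i h1 h2 h3, neg_zero])]
      show v istar false + v j false + v j' false = _
      rw [hvf, hvf, hvf, hui, huj, huj']; ring
    -- weighted sums
    have hTtrue : ∑ i ∈ Finset.univ.erase istar, w i * v i true = -(w j * η) := by
      rw [sum2e istar j j' hj hj' hjj' (fun i => w i * v i true)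
        (fun i h1 h2 h3 => by show w i * v i true = 0; rw [hvt i, hu0 i h1 h2 h3, mul_zero])]
      show w j * v j true + w j' * v j' true = _
      rw [hvt, hvt, huj, huj', hd, hrdef]
      field_simp; ring
    have hTfalse : ∑ i ∈ Finset.univ.erase istar, w i * v i false = w j * η := by
      rw [sum2e istar j j' hj hj' hjj' (fun i => w i * v i false)
        (fun i h1 h2 h3 => by show w i * v i false = 0; rw [hvf i, hu0 i h1 h2 h3, neg_zero, mul_zero])]
      show w j * v j false + w j' * v j' false = _
      rw [hvf, hvf, huj, huj', hd, hrdef]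
      field_simp; ring
    have hwη : 0 < w j * η := mul_pos hwj hη0
    have hfv : f v = false := by
      cases hfvv : f v with
      | false => rfl
      | true =>
        have h1 := hf v hbound false
        rw [hfvv, hTtrue, hTfalse] at h1
        linarith
    refine ⟨v, hbound, ?_⟩
    rw [hfv, hStrue, hSfalse]
    have hS0 : (0:ℝ) ≤ 2 * c - d := by rw [hd, hc]; nlinarith
    rw [max_eq_left (by linarith : -(2 * c - d) ≤ 2 * c - d)]
    rw [hd, hc]
    nlinarith [mul_pos hη0 hr0, hη0, hηε, hr0, hr1, hε]
  · nlinarith
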